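/- Let G be a graph of order n, λ ∈ σ(G), and X ⊂ V(G) a λ-star set of G with adjacency matrix in block form [[A_X, Nᵀ],[N, C]]. Then the rows of the |X̄| × n matrix [N C − λI] span the row space of A_G − λI_n. -/

import Mathlib

open Matrix

noncomputable def eigSpace {m : Type*} [Fintype m] [DecidableEq m]
    (A : Matrix m m ℝ) (lam : ℝ) : Submodule ℝ (m → ℝ) :=
  LinearMap.ker (Matrix.mulVecLin (A - lam • (1 : Matrix m m ℝ)))

def IsEig {m : Type*} [Fintype m] [DecidableEq m] (A : Matrix m m ℝ) (lam : ℝ) : Prop :=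
  eigSpace A lam ≠ ⊥

noncomputable def multE {m : Type*} [Fintype m] [DecidableEq m]
    (A : Matrix m m ℝ) (lam : ℝ) : ℕ :=
  Module.finrank ℝ (eigSpace A lam)

def IsMainEig {m : Type*} [Fintype m] [DecidableEq m] (A : Matrix m m ℝ) (lam : ℝ) : Prop :=
  ∃ x ∈ eigSpace A lam, ∑ i, x i ≠ 0

def indMatrix {n : ℕ} (G : SimpleGraph (Fin n)) [DecidableRel G.Adj] (S : Finset (Fin n)) :
    Matrix S S ℝ :=
  (G.adjMatrix ℝ).submatrix (fun i => (i : Fin n)) (fun j => (j : Fin n))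

def IsStarSet {n : ℕ} (G : SimpleGraph (Fin n)) [DecidableRel G.Adj] (lam : ℝ)
    (X : Finset (Fin n)) : Prop :=
  X.card = multE (G.adjMatrix ℝ) lam ∧ ¬ IsEig (indMatrix G Xᶜ) lam

def Nmat {n : ℕ} (G : SimpleGraph (Fin n)) [DecidableRel G.Adj] (X : Finset (Fin n)) :
    Matrix ↥(Xᶜ) ↥X ℝ :=
  (G.adjMatrix ℝ).submatrix (fun i => (i : Fin n)) (fun j => (j : Fin n))

def Cmat {n : ℕ} (G : SimpleGraph (Fin n)) [DecidableRel G.Adj] (X : Finset (Fin n)) :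
    Matrix ↥(Xᶜ) ↥(Xᶜ) ℝ :=
  indMatrix G Xᶜ

theorem stmt4 {n : ℕ} (G : SimpleGraph (Fin n)) [DecidableRel G.Adj] (lam : ℝ)
    (hlam : IsEig (G.adjMatrix ℝ) lam)
    (X : Finset (Fin n)) (hX : IsStarSet G lam X) :
    Submodule.span ℝ
        (Set.range fun i : ↥(Xᶜ) => (G.adjMatrix ℝ - lam • 1) (i : Fin n)) =
      Submodule.span ℝ
        (Set.range fun i : Fin n => (G.adjMatrix ℝ - lam • 1) i) := by
  classical
  set M : Matrix (Fin n) (Fin n) ℝ := G.adjMatrix ℝ - lam • 1 with hM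
  have hMT : Mᵀ = M := by simp [hM, transpose_sub, transpose_smul]
  -- the eigenspace of the complement is trivial
  have hCbot : eigSpace (indMatrix G Xᶜ) lam = ⊥ := by
    by_contra h; exact hX.2 h
  -- linear independence of the rows indexed by Xᶜ
  have hindep : LinearIndependent ℝ (fun i : ↥(Xᶜ) => M (i : Fin n)) := by
    rw [Fintype.linearIndependent_iff]
    intro c hc
    set y : Fin n → ℝ := fun j => if h : j ∈ Xᶜ then c ⟨j, h⟩ else 0 with hy
    have hsum : ∑ j : Fin n, y j • M j = 0 := by
      have h1 : ∑ j : Fin n, y j • M j = ∑ j ∈ Xᶜ, y j • M j := by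
        symm
        apply Finset.sum_subset (Finset.subset_univ _)
        intro j _ hj
        simp only [hy]
        rw [dif_neg hj, zero_smul]
      have h2 : ∑ j ∈ Xᶜ, y j • M j = ∑ i : ↥(Xᶜ), c i • M (i : Fin n) := by
        rw [← Finset.sum_coe_sort (Xᶜ) (fun j => y j • M j)]
        apply Finset.sum_congr rfl
        intro i _
        simp only [hy]
        rw [dif_pos i.2]
      rw [h1, h2, hc]
    have hyM : M *ᵥ y = 0 := by
      have : y ᵥ* M = 0 := by
        rw [show y ᵥ* M = ∑ j, y j • M j from ?_]
        · exact hsum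
        · ext k; simp [vecMul, dotProduct, Finset.sum_apply, mul_comm]
      rw [← hMT] at this
      rwa [vecMul_transpose] at this
    -- the restriction of y to Xᶜ lies in the kernel of C - lam • 1
    have hck : c ∈ eigSpace (indMatrix G Xᶜ) lam := by
      show Matrix.mulVecLin _ c = 0
      ext i
      have hent : ∀ j : ↥(Xᶜ),
          (indMatrix G Xᶜ - lam • (1 : Matrix ↥(Xᶜ) ↥(Xᶜ) ℝ)) i j = M (i : Fin n) (j : Fin n) := by
        intro j
        by_cases h : i = j
        · subst h
          simp [indMatrix, hM, Matrix.one_apply]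
        · have h' : (i : Fin n) ≠ (j : Fin n) := fun hh => h (Subtype.ext hh)
          simp [indMatrix, hM, Matrix.one_apply, h, h']
      have : ((indMatrix G Xᶜ - lam • 1) *ᵥ c) i = (M *ᵥ y) (i : Fin n) := by
        simp only [mulVec, dotProduct]
        have e1 : ∑ x : Fin n, M (i : Fin n) x * y x = ∑ j ∈ Xᶜ, M (i : Fin n) j * y j := by
          symm
          apply Finset.sum_subset (Finset.subset_univ _)
          intro j _ hj
          simp only [hy]
          rw [dif_neg hj, mul_zero]
        have e2 : ∑ j ∈ Xᶜ, M (i : Fin n) j * y j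
            = ∑ j : ↥(Xᶜ), (indMatrix G Xᶜ - lam • 1) i j * c j := by
          rw [← Finset.sum_coe_sort (Xᶜ) (fun j => M (i : Fin n) j * y j)]
          apply Finset.sum_congr rfl
          intro j _
          rw [hent j]
          simp only [hy]
          rw [dif_pos j.2]
        rw [e1, e2]
      show ((indMatrix G Xᶜ - lam • 1) *ᵥ c) i = 0
      rw [this, hyM, Pi.zero_apply]
    rw [hCbot, Submodule.mem_bot] at hck
    intro i; rw [hck]; rfl
  -- finrank of the small span
  have hfr1 : Module.finrank ℝ
      (Submodule.span ℝ (Set.range fun i : ↥(Xᶜ) => M (i : Fin n))) = Xᶜ.card := by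
    rw [finrank_span_eq_card hindep]
    exact Fintype.card_coe _
  -- the big span equals the range of mulVecLin M
  have hbig : Submodule.span ℝ (Set.range fun i : Fin n => M i)
      = LinearMap.range M.mulVecLin := by
    rw [Matrix.range_mulVecLin]
    congr 2
    ext i j
    exact congrFun (congrFun hMT.symm i) j
  have hrn : Module.finrank ℝ (LinearMap.range M.mulVecLin)
      + Module.finrank ℝ (LinearMap.ker M.mulVecLin) = n := by
    have := LinearMap.finrank_range_add_finrank_ker M.mulVecLin
    simpa using this
  have hker : Module.finrank ℝ (LinearMap.ker M.mulVecLin) = X.card := by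
    have : LinearMap.ker M.mulVecLin = eigSpace (G.adjMatrix ℝ) lam := rfl
    rw [this]
    exact hX.1.symm
  have hcompl : Xᶜ.card + X.card = n := by
    have := Finset.card_compl X
    have hle : X.card ≤ n := by simpa using Finset.card_le_univ X
    simp only [Fintype.card_fin] at this
    omega
  -- conclude
  apply Submodule.eq_of_le_of_finrank_le
  · apply Submodule.span_mono
    rintro _ ⟨i, rfl⟩
    exact ⟨(i : Fin n), rfl⟩
  · rw [hfr1]
    have : Module.finrank ℝ
        (Submodule.span ℝ (Set.range fun i : Fin n => M i)) + X.card = n := by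
      rw [hbig, ← hker]; exact hrn
    omega
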